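/- Let G=(V,E) be a finite simple graph with a source s ∈ V and terminals t_1,…,t_r ∈ V, and let h ≥ 1, ℓ ≥ 1 be integers. Let H ⊆ E be a connected edge set satisfying (h,ℓ)-hop-connectivity, and let Q ⊆ H be a violating edge set. Then the graph on the vertices incident to H with edge set H∖Q has at most two connected components, and every connected component contains s or some terminal t_i. -/

import Mathlib

/-- An edge set `H` satisfies `(h, ℓ)`-hop-connectivity for source `s` and terminals `t i`
if for every `i` and every `Q ⊆ H` with `|Q| < ℓ`, the graph with edge set `H \ Q`
contains an `s`–`t i` path of hop-length at most `h`. -/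
def SatisfiesHopConn {V : Type*} [DecidableEq V] (s : V) {r : ℕ} (t : Fin r → V)
    (h ℓ : ℕ) (H : Finset (Sym2 V)) : Prop :=
  ∀ i : Fin r, ∀ Q ⊆ H, Q.card < ℓ →
    ∃ p : (SimpleGraph.fromEdgeSet (↑(H \ Q) : Set (Sym2 V))).Walk s (t i),
      p.IsPath ∧ p.length ≤ h

/-- Let `H` be a connected edge set satisfying `(h, ℓ)`-hop-connectivity
and let `Q ⊆ H` be a violating edge set.  Then the graph on the vertices incident to `H`
with edge set `H \ Q` has at most two connected components (among any three vertices
incident to `H`, two are joined in `H \ Q`), and every connected component contains `s`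
or some terminal `t i` (every vertex incident to `H` reaches `s` or some `t i`). -/
theorem violating_set_two_components
    {V : Type*} [Fintype V] [DecidableEq V] (G : SimpleGraph V)
    (s : V) {r : ℕ} (t : Fin r → V) (h ℓ : ℕ) (hh : 1 ≤ h) (hℓ : 1 ≤ ℓ)
    (H : Finset (Sym2 V)) (hHE : (↑H : Set (Sym2 V)) ⊆ G.edgeSet)
    -- H is connected: any two vertices incident to H are joined in H
    (hHconn : ∀ u v : V, (∃ e ∈ H, u ∈ e) → (∃ e ∈ H, v ∈ e) →
      (SimpleGraph.fromEdgeSet (↑H : Set (Sym2 V))).Reachable u v)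
    (hconn : SatisfiesHopConn s t h ℓ H)
    -- Q is a violating edge set
    (Q : Finset (Sym2 V)) (hQH : Q ⊆ H) (hQcard : Q.card ≤ ℓ)
    (hviol : ∃ i : Fin r,
      ¬ ∃ p : (SimpleGraph.fromEdgeSet (↑(H \ Q) : Set (Sym2 V))).Walk s (t i),
          p.IsPath ∧ p.length ≤ h) :
    -- at most two connected components
    (∀ u v w : V, (∃ e ∈ H, u ∈ e) → (∃ e ∈ H, v ∈ e) → (∃ e ∈ H, w ∈ e) →
      (SimpleGraph.fromEdgeSet (↑(H \ Q) : Set (Sym2 V))).Reachable u v ∨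
      (SimpleGraph.fromEdgeSet (↑(H \ Q) : Set (Sym2 V))).Reachable u w ∨
      (SimpleGraph.fromEdgeSet (↑(H \ Q) : Set (Sym2 V))).Reachable v w) ∧
    -- every component contains s or a terminal
    (∀ u : V, (∃ e ∈ H, u ∈ e) →
      (SimpleGraph.fromEdgeSet (↑(H \ Q) : Set (Sym2 V))).Reachable u s ∨
      ∃ i : Fin r, (SimpleGraph.fromEdgeSet (↑(H \ Q) : Set (Sym2 V))).Reachable u (t i)) := by
  classical
  obtain ⟨i, hi⟩ := hviol
  set G' := SimpleGraph.fromEdgeSet (↑(H \ Q) : Set (Sym2 V)) with hG'def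
  have hsne : s ≠ t i := by
    intro hst
    rw [← hst] at hi
    exact hi ⟨SimpleGraph.Walk.nil, SimpleGraph.Walk.IsPath.nil, by simp⟩
  -- Lemma A: both endpoints of every edge of Q reach s or t i in H \ Q.
  have lemA : ∀ q ∈ Q, ∀ x ∈ q, G'.Reachable x s ∨ G'.Reachable x (t i) := by
    intro q hq x hx
    have hsub : Q.erase q ⊆ H := (Finset.erase_subset _ _).trans hQH
    have hcard : (Q.erase q).card < ℓ := by
      have h1 : 1 ≤ Q.card := Finset.card_pos.mpr ⟨q, hq⟩
      have h2 := Finset.card_erase_of_mem hq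
      omega
    obtain ⟨p, hp, hlen⟩ := hconn i (Q.erase q) hsub hcard
    have key : ∀ e ∈ p.edges, e ≠ q → e ∈ G'.edgeSet := by
      intro e he hne
      have h1 := p.edges_subset_edgeSet he
      rw [SimpleGraph.edgeSet_fromEdgeSet] at h1 ⊢
      refine ⟨?_, h1.2⟩
      have h2 : e ∈ H \ Q.erase q := by exact_mod_cast h1.1
      rw [Finset.mem_sdiff] at h2
      have : e ∉ Q := fun heQ => h2.2 (Finset.mem_erase.mpr ⟨hne, heQ⟩)
      exact_mod_cast Finset.mem_sdiff.mpr ⟨h2.1, this⟩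
    by_cases hqe : q ∈ p.edges
    · -- x is on p; split p at x
      have hxsup : x ∈ p.support := by
        induction q with
        | h a b =>
          rcases Sym2.mem_iff.mp hx with rfl | rfl
          · exact p.fst_mem_support_of_mem_edges hqe
          · exact p.snd_mem_support_of_mem_edges hqe
      have hspec := p.take_spec hxsup
      have hnodup := hp.edges_nodup
      rw [← hspec, SimpleGraph.Walk.edges_append, List.nodup_append] at hnodup
      by_cases hq1 : q ∈ (p.takeUntil x hxsup).edges
      · -- q is in the first part, so the second part avoids q
        have hq2 : q ∉ (p.dropUntil x hxsup).edges := fun h2 => hnodup.2.2 q hq1 q h2 rfl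
        refine Or.inr ⟨(p.dropUntil x hxsup).transfer G' ?_⟩
        intro e he
        exact key e (p.edges_dropUntil_subset hxsup he) (fun hEq => hq2 (hEq ▸ he))
      · refine Or.inl ⟨((p.takeUntil x hxsup).transfer G' ?_).reverse⟩
        intro e he
        exact key e (p.edges_takeUntil_subset hxsup he) (fun hEq => hq1 (hEq ▸ he))
    · -- p avoids Q entirely: contradiction with violation
      exact absurd ⟨p.transfer G' (fun e he => key e he (fun hEq => hqe (hEq ▸ he))),
        hp.transfer _, by rw [SimpleGraph.Walk.length_transfer]; exact hlen⟩ hi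
  -- Lemma B: walking in H, reaching s or t i propagates backwards.
  have lemB : ∀ {u v : V} (w : (SimpleGraph.fromEdgeSet (↑H : Set (Sym2 V))).Walk u v),
      (G'.Reachable v s ∨ G'.Reachable v (t i)) →
      (G'.Reachable u s ∨ G'.Reachable u (t i)) := by
    intro u v w
    induction w with
    | nil => exact id
    | @cons a b c ha w ih =>
      intro hv
      have hb := ih hv
      rw [SimpleGraph.fromEdgeSet_adj] at ha
      by_cases hQ : s(a, b) ∈ Q
      · exact lemA _ hQ a (Sym2.mem_mk_left a b)
      · have hadj : G'.Adj a b := by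
          rw [hG'def, SimpleGraph.fromEdgeSet_adj]
          have : s(a, b) ∈ H := by exact_mod_cast ha.1
          exact ⟨by exact_mod_cast Finset.mem_sdiff.mpr ⟨this, hQ⟩, ha.2⟩
        rcases hb with hb | hb
        · exact Or.inl (hadj.reachable.trans hb)
        · exact Or.inr (hadj.reachable.trans hb)
  -- s is incident to H
  have hs_inc : ∃ e ∈ H, s ∈ e := by
    obtain ⟨p, hp, _⟩ := hconn i ∅ (by simp) (by simp; omega)
    cases p with
    | nil => exact absurd rfl hsne
    | @cons _ b _ ha _ =>
      rw [SimpleGraph.fromEdgeSet_adj] at ha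
      have : s(s, b) ∈ H \ (∅ : Finset (Sym2 V)) := by exact_mod_cast ha.1
      exact ⟨s(s, b), by simpa using this, Sym2.mem_mk_left s b⟩
  -- every vertex incident to H reaches s or t i
  have reaches : ∀ u : V, (∃ e ∈ H, u ∈ e) →
      G'.Reachable u s ∨ G'.Reachable u (t i) := by
    intro u hu
    obtain ⟨w⟩ := hHconn u s hu hs_inc
    exact lemB w (Or.inl (SimpleGraph.Reachable.refl s))
  constructor
  · intro u v w hu hv hw
    rcases reaches u hu with h1 | h1 <;> rcases reaches v hv with h2 | h2 <;>
      rcases reaches w hw with h3 | h3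
    · exact Or.inl (h1.trans h2.symm)
    · exact Or.inl (h1.trans h2.symm)
    · exact Or.inr (Or.inl (h1.trans h3.symm))
    · exact Or.inr (Or.inr (h2.trans h3.symm))
    · exact Or.inr (Or.inr (h2.trans h3.symm))
    · exact Or.inr (Or.inl (h1.trans h3.symm))
    · exact Or.inl (h1.trans h2.symm)
    · exact Or.inl (h1.trans h2.symm)
  · intro u hu
    rcases reaches u hu with h1 | h1
    · exact Or.inl h1
    · exact Or.inr ⟨i, h1⟩
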